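/- Let F be a positive definite symmetric n×n matrix, g, a, c ∈ ℝⁿ with g ≠ 0, b, d ∈ ℝ, δ > 0, and let u = √(2δ/(gᵀF⁻¹g)). Define θ^{1/3} = θᵏ + u F⁻¹ g. If the minimizer of (1/2)(θ − θ^{1/3})ᵀF(θ − θ^{1/3}) over {θ : aᵀ(θ − θᵏ) + b ≤ 0} is θ^{2/3}, and the minimizer of (1/2)(θ − θ^{1/3})ᵀF(θ − θ^{1/3}) over {θ : cᵀ(θ − θᵏ) + d ≤ 0} is θ', then combining the two displacement corrections gives θᵏ⁺¹ = θᵏ + u F⁻¹g − max(0, (u aᵀF⁻¹g + b)/(aᵀF⁻¹a)) F⁻¹a − max(0, (u cᵀF⁻¹g + d)/(cᵀF⁻¹c)) F⁻¹c, i.e., θᵏ⁺¹ = θ^{2/3} + (θ' − θ^{1/3}). -/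

import Mathlib

open scoped Matrix

lemma quad_pos {n : ℕ} {F : Matrix (Fin n) (Fin n) ℝ} (hF : F.PosDef)
    {v : Fin n → ℝ} (hv : v ≠ 0) : 0 < v ⬝ᵥ F.mulVec v := by
  have := hF.re_dotProduct_pos hv
  simpa using this

lemma quad_nonpos_eq {n : ℕ} {F : Matrix (Fin n) (Fin n) ℝ} (hF : F.PosDef)
    {v : Fin n → ℝ} (h : v ⬝ᵥ F.mulVec v ≤ 0) : v = 0 := by
  by_contra hv
  exact absurd h (not_le.mpr (quad_pos hF hv))

lemma sym_cross {n : ℕ} {F : Matrix (Fin n) (Fin n) ℝ} (hF : F.PosDef)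
    (v w : Fin n → ℝ) : v ⬝ᵥ F.mulVec w = w ⬝ᵥ F.mulVec v := by
  rw [Matrix.dotProduct_mulVec, ← Matrix.mulVec_transpose]
  have hT : Fᵀ = F := by
    have := hF.1
    simpa [Matrix.IsHermitian, Matrix.conjTranspose_eq_transpose_of_trivial] using this
  rw [hT, dotProduct_comm]

lemma proj_char {n : ℕ} {F : Matrix (Fin n) (Fin n) ℝ} (hF : F.PosDef)
    (a : Fin n → ℝ) (b : ℝ) (p θk x : Fin n → ℝ)
    (hx : a ⬝ᵥ (x - θk) + b ≤ 0)
    (hmin : ∀ θ : Fin n → ℝ, a ⬝ᵥ (θ - θk) + b ≤ 0 →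
      (x - p) ⬝ᵥ F.mulVec (x - p) ≤ (θ - p) ⬝ᵥ F.mulVec (θ - p)) :
    x = p - max 0 ((a ⬝ᵥ (p - θk) + b) / (a ⬝ᵥ F⁻¹.mulVec a)) • F⁻¹.mulVec a := by
  by_cases ha : a = 0
  · subst ha
    simp only [Matrix.mulVec_zero, smul_zero, sub_zero]
    have hb : b ≤ 0 := by simpa using hx
    have h1 := hmin p (by simpa using hb)
    simp only [sub_self] at h1
    have h0 : (0 : Fin n → ℝ) ⬝ᵥ F.mulVec 0 = 0 := by simp
    rw [h0] at h1
    exact sub_eq_zero.mp (quad_nonpos_eq hF h1)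
  · have hFi : F⁻¹.PosDef := hF.inv
    set s : ℝ := a ⬝ᵥ F⁻¹.mulVec a with hs
    have hspos : 0 < s := quad_pos hFi ha
    set r : ℝ := a ⬝ᵥ (p - θk) + b with hr
    set t : ℝ := max 0 (r / s) with ht
    have ht0 : 0 ≤ t := le_max_left _ _
    have hts : r ≤ t * s := by
      have : r / s ≤ t := le_max_right _ _
      calc r = (r / s) * s := by field_simp
        _ ≤ t * s := by nlinarith
    set q : Fin n → ℝ := p - t • F⁻¹.mulVec a with hq
    -- F.mulVec (F⁻¹.mulVec a) = a
    have hFinv : F.mulVec (F⁻¹.mulVec a) = a := by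
      rw [Matrix.mulVec_mulVec, Matrix.mul_nonsing_inv F hF.det_pos.ne'.isUnit,
        Matrix.one_mulVec]
    have hFqp : F.mulVec (q - p) = (-t) • a := by
      rw [hq, sub_sub_cancel_left, Matrix.mulVec_neg, Matrix.mulVec_smul, hFinv, neg_smul]
    -- a ⬝ (q - θk) + b = r - t * s
    have haq : a ⬝ᵥ (q - θk) + b = r - t * s := by
      have : q - θk = (p - θk) - t • F⁻¹.mulVec a := by rw [hq]; abel
      rw [this, dotProduct_sub, dotProduct_smul]
      rw [hr, hs]; ring_nf
    have hqfeas : a ⬝ᵥ (q - θk) + b ≤ 0 := by rw [haq]; linarith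
    -- complementary slackness: t * (a ⬝ (x - q)) ≤ 0
    have hcs : t * (a ⬝ᵥ (x - q)) ≤ 0 := by
      rcases eq_or_lt_of_le ht0 with h0 | hpos
      · rw [← h0]; simp
      · have hrs : 0 < r / s := by
          by_contra h
          push_neg at h
          have : t = 0 := by rw [ht, max_eq_left h]
          linarith
        have htval : t = r / s := by rw [ht, max_eq_right (le_of_lt hrs)]
        have hact : a ⬝ᵥ (q - θk) + b = 0 := by
          rw [haq, htval]; field_simp; ring
        have hxq : a ⬝ᵥ (x - q) ≤ 0 := by
          have hxqd : x - q = (x - θk) - (q - θk) := by abel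
          have hdiff : a ⬝ᵥ (x - q) = a ⬝ᵥ (x - θk) - a ⬝ᵥ (q - θk) := by
            rw [hxqd, dotProduct_sub]
          have : a ⬝ᵥ (q - θk) = -b := by linarith
          rw [hdiff, this]; linarith
        exact mul_nonpos_of_nonneg_of_nonpos (le_of_lt hpos) hxq
    -- expansion
    have hexp : (x - p) ⬝ᵥ F.mulVec (x - p)
        = (x - q) ⬝ᵥ F.mulVec (x - q) + (q - p) ⬝ᵥ F.mulVec (q - p)
          + 2 * ((x - q) ⬝ᵥ F.mulVec (q - p)) := by
      have hxp : x - p = (x - q) + (q - p) := by abel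
      rw [hxp, add_dotProduct, Matrix.mulVec_add, dotProduct_add,
        dotProduct_add, sym_cross hF (q - p) (x - q)]
      ring
    have hcross : (x - q) ⬝ᵥ F.mulVec (q - p) = -(t * (a ⬝ᵥ (x - q))) := by
      rw [hFqp, dotProduct_smul, dotProduct_comm]
      rw [smul_eq_mul]; ring
    have hminq := hmin q hqfeas
    have hxqzero : (x - q) ⬝ᵥ F.mulVec (x - q) ≤ 0 := by
      rw [hexp, hcross] at hminq
      linarith
    have := quad_nonpos_eq hF hxqzero
    have : x = q := sub_eq_zero.mp this
    rw [this, hq]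

theorem stmt_11 {n : ℕ} (F : Matrix (Fin n) (Fin n) ℝ) (hF : F.PosDef)
    (g a c : Fin n → ℝ) (hg : g ≠ 0) (b d δ : ℝ) (hδ : 0 < δ)
    (θk θtwothirds θ' : Fin n → ℝ)
    (u : ℝ) (hu : u = Real.sqrt (2 * δ / (g ⬝ᵥ F⁻¹.mulVec g))) :
    let θonethird := θk + u • F⁻¹.mulVec g
    (a ⬝ᵥ (θtwothirds - θk) + b ≤ 0) →
    (∀ θ : Fin n → ℝ, a ⬝ᵥ (θ - θk) + b ≤ 0 →
      (θtwothirds - θonethird) ⬝ᵥ F.mulVec (θtwothirds - θonethird)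
        ≤ (θ - θonethird) ⬝ᵥ F.mulVec (θ - θonethird)) →
    (c ⬝ᵥ (θ' - θk) + d ≤ 0) →
    (∀ θ : Fin n → ℝ, c ⬝ᵥ (θ - θk) + d ≤ 0 →
      (θ' - θonethird) ⬝ᵥ F.mulVec (θ' - θonethird)
        ≤ (θ - θonethird) ⬝ᵥ F.mulVec (θ - θonethird)) →
    θk + u • F⁻¹.mulVec g
      - max 0 ((u * (a ⬝ᵥ F⁻¹.mulVec g) + b) / (a ⬝ᵥ F⁻¹.mulVec a)) • F⁻¹.mulVec a
      - max 0 ((u * (c ⬝ᵥ F⁻¹.mulVec g) + d) / (c ⬝ᵥ F⁻¹.mulVec c)) • F⁻¹.mulVec c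
      = θtwothirds + (θ' - θonethird) := by
  intro θonethird hfa hma hfc hmc
  have hp : θonethird - θk = u • F⁻¹.mulVec g := by
    simp [θonethird]
  have hdot : ∀ v : Fin n → ℝ, v ⬝ᵥ (θonethird - θk) = u * (v ⬝ᵥ F⁻¹.mulVec g) := by
    intro v
    rw [hp, dotProduct_smul, smul_eq_mul]
  have h2 := proj_char hF a b θonethird θk θtwothirds hfa hma
  have h3 := proj_char hF c d θonethird θk θ' hfc hmc
  rw [hdot a] at h2
  rw [hdot c] at h3
  rw [h2, h3]
  simp only [θonethird]
  abel
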